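/- Let C = ⟨a_1(x),…,a_ρ(x)⟩ be a ρ-generator Λ-multi-twisted code of length n over F_q. For each i let b_i be the maximum number of consecutive exponents among the zeros (in the appropriate splitting field) of gcd(a_{1,i}(x),…,a_{ρ,i}(x), x^{m_i}−λ_i). Then the minimum Hamming distance of C satisfies d_min(C) ≥ min_{1≤i≤ℓ} (b_i + 1). -/

import Mathlib

open Polynomial Finset
open scoped Classical

noncomputable instance {F : Type*} [Field F] : NormalizedGCDMonoid (Polynomial F) :=
  UniqueFactorizationMonoid.toNormalizedGCDMonoid _

/-- The `Λ`-multi-twisted shift on `F^n = ∏ i, F^{m i}`. -/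
def mtShift {F : Type*} [Field F] {ℓ : ℕ} (m : Fin ℓ → ℕ) (hm : ∀ i, 0 < m i)
    (Λ : Fin ℓ → F) (c : ∀ i, Fin (m i) → F) : ∀ i, Fin (m i) → F :=
  fun i j =>
    if (j : ℕ) = 0 then Λ i * c i ⟨m i - 1, Nat.sub_lt (hm i) Nat.one_pos⟩
    else c i ⟨(j : ℕ) - 1, lt_of_le_of_lt (Nat.sub_le _ _) j.isLt⟩

/-- The polynomial `∑ j a_j x^j` associated to a coefficient vector. -/
noncomputable def blockPoly {F : Type*} [Field F] {n : ℕ} (a : Fin n → F) : Polynomial F :=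
  ∑ j, Polynomial.C (a j) * Polynomial.X ^ (j : ℕ)

/-- The Hamming weight of a vector of `F^n = ∏ i, F^{m i}`. -/
noncomputable def mtWeight {F : Type*} [Field F] {ℓ : ℕ} (m : Fin ℓ → ℕ)
    (c : ∀ i, Fin (m i) → F) : ℕ :=
  ∑ i, (Finset.univ.filter fun j => c i j ≠ 0).card

lemma aeval_blockPoly {F K : Type*} [Field F] [Field K] [Algebra F K] {n : ℕ}
    (a : Fin n → F) (x : K) :
    aeval x (blockPoly a) = ∑ j, algebraMap F K (a j) * x ^ (j : ℕ) := by
  simp [blockPoly]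

lemma shift_aux {F K : Type*} [Field F] [Field K] [Algebra F K] (M : ℕ) (hM : 0 < M)
    (lam : F) (a : Fin M → F) (α : K) (hα : α ^ M = algebraMap F K lam) :
    aeval α (blockPoly (fun j : Fin M =>
      if (j : ℕ) = 0 then lam * a ⟨M - 1, Nat.sub_lt hM Nat.one_pos⟩
      else a ⟨(j : ℕ) - 1, lt_of_le_of_lt (Nat.sub_le _ _) j.isLt⟩))
    = α * aeval α (blockPoly a) := by
  obtain ⟨n, rfl⟩ : ∃ n, M = n + 1 := ⟨M - 1, (Nat.succ_pred_eq_of_pos hM).symm⟩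
  rw [aeval_blockPoly, aeval_blockPoly, Finset.mul_sum, Fin.sum_univ_succ,
    Fin.sum_univ_castSucc]
  have e1 : (algebraMap F K) ((if ((0 : Fin (n+1)) : ℕ) = 0 then
        lam * a ⟨n + 1 - 1, Nat.sub_lt hM Nat.one_pos⟩
        else a ⟨((0 : Fin (n+1)) : ℕ) - 1, lt_of_le_of_lt (Nat.sub_le _ _) (0 : Fin (n+1)).isLt⟩))
        * α ^ ((0 : Fin (n+1)) : ℕ)
      = α * ((algebraMap F K) (a (Fin.last n)) * α ^ ((Fin.last n : Fin (n+1)) : ℕ)) := by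
    have : (⟨n + 1 - 1, Nat.sub_lt hM Nat.one_pos⟩ : Fin (n+1)) = Fin.last n := rfl
    simp only [this, Fin.val_zero, ↓reduceIte, _root_.map_mul, pow_zero, mul_one, ← hα,
      Fin.val_last, pow_succ]
    ring
  rw [e1]
  have e2 : ∀ j : Fin n,
      (algebraMap F K) ((if ((j.succ : Fin (n+1)) : ℕ) = 0 then
        lam * a ⟨n + 1 - 1, Nat.sub_lt hM Nat.one_pos⟩
        else a ⟨((j.succ : Fin (n+1)) : ℕ) - 1, lt_of_le_of_lt (Nat.sub_le _ _) j.succ.isLt⟩))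
        * α ^ ((j.succ : Fin (n+1)) : ℕ)
      = α * ((algebraMap F K) (a j.castSucc) * α ^ ((j.castSucc : Fin (n+1)) : ℕ)) := by
    intro j
    have h1 : ((j.succ : Fin (n+1)) : ℕ) = (j : ℕ) + 1 := rfl
    have h2 : (⟨(j : ℕ) + 1 - 1, lt_of_le_of_lt (Nat.sub_le _ _) j.succ.isLt⟩ : Fin (n+1))
        = j.castSucc := by ext; simp
    simp only [h1, if_neg (Nat.succ_ne_zero _), h2, Fin.coe_castSucc, pow_succ]
    ring
  rw [Finset.sum_congr rfl (fun j _ => e2 j), add_comm]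

lemma bch_core {F K : Type*} [Field F] [Field K] [Algebra F K] (M bb : ℕ)
    (a : Fin M → F) (ha : a ≠ 0) (dlt z : K) (hd : dlt ≠ 0) (hz0 : z ≠ 0)
    (hz : ∀ ⦃i j : ℕ⦄, i < M → j < M → z ^ i = z ^ j → i = j) (j0 : ℕ)
    (hvan : ∀ s < bb, ∑ j : Fin M, algebraMap F K (a j) * (dlt * z ^ (j0 + s)) ^ (j : ℕ) = 0) :
    bb + 1 ≤ (Finset.univ.filter fun j => a j ≠ 0).card := by
  by_contra hlt
  push_neg at hlt
  set S := Finset.univ.filter fun j => a j ≠ 0 with hS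
  have hw : S.card ≤ bb := Nat.lt_succ_iff.mp hlt
  have hne : S.Nonempty := by
    obtain ⟨j, hj⟩ := Function.ne_iff.mp ha
    exact ⟨j, Finset.mem_filter.mpr ⟨Finset.mem_univ _, hj⟩⟩
  set w := S.card with hwdef
  have hwpos : 0 < w := Finset.card_pos.mpr hne
  let e := S.orderIsoOfFin rfl
  set x : Fin w → K := fun t => z ^ ((e t : Fin M) : ℕ) with hx
  have hxinj : Function.Injective x := by
    intro t t' h
    have := hz (e t : Fin M).isLt (e t' : Fin M).isLt h
    have : (e t : Fin M) = (e t' : Fin M) := Fin.ext this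
    exact e.injective (Subtype.ext this)
  set v : Fin w → K := fun t =>
    algebraMap F K (a (e t)) * (dlt * z ^ j0) ^ ((e t : Fin M) : ℕ) with hv
  have hmv : (Matrix.vandermonde x).transpose.mulVec v = 0 := by
    funext s
    have hs : (s : ℕ) < bb := lt_of_lt_of_le s.isLt hw
    have h1 := hvan s hs
    have h2 : ∑ j : Fin M, algebraMap F K (a j) * (dlt * z ^ (j0 + (s:ℕ))) ^ (j : ℕ)
        = ∑ j ∈ S, algebraMap F K (a j) * (dlt * z ^ (j0 + (s:ℕ))) ^ (j : ℕ) := by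
      rw [← Finset.sum_filter_add_sum_filter_not Finset.univ (fun j => a j ≠ 0)]
      have : ∑ j ∈ Finset.univ.filter (fun j => ¬ a j ≠ 0),
          algebraMap F K (a j) * (dlt * z ^ (j0 + (s:ℕ))) ^ (j : ℕ) = 0 := by
        apply Finset.sum_eq_zero
        intro j hj
        simp only [Finset.mem_filter, not_not] at hj
        simp [hj.2]
      rw [this, add_zero]
    have h3 : ∑ j ∈ S, algebraMap F K (a j) * (dlt * z ^ (j0 + (s:ℕ))) ^ (j : ℕ)
        = ∑ t : Fin w, algebraMap F K (a (e t)) * (dlt * z ^ (j0 + (s:ℕ))) ^ ((e t : Fin M) : ℕ) := by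
      rw [← Finset.sum_coe_sort S]
      exact (Equiv.sum_comp e.toEquiv _).symm
    have h4 : ∀ t : Fin w,
        algebraMap F K (a (e t)) * (dlt * z ^ (j0 + (s:ℕ))) ^ ((e t : Fin M) : ℕ)
        = (Matrix.vandermonde x).transpose s t * v t := by
      intro t
      simp only [Matrix.transpose_apply, Matrix.vandermonde, hv, hx, Matrix.of_apply]
      have hk : (dlt * z ^ (j0 + (s:ℕ))) ^ ((e t : Fin M) : ℕ)
          = (dlt * z ^ j0) ^ ((e t : Fin M) : ℕ) * (z ^ ((e t : Fin M) : ℕ)) ^ (s : ℕ) := by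
        rw [pow_add, ← mul_assoc, mul_pow (dlt * z ^ j0), ← pow_mul,
          mul_comm ((s:ℕ)) ((e t : Fin M) : ℕ), pow_mul]
      rw [hk]; ring
    rw [h2, h3, Finset.sum_congr rfl (fun t _ => h4 t)] at h1
    simpa [Matrix.mulVec, dotProduct] using h1
  have hdet : ((Matrix.vandermonde x).transpose).det ≠ 0 := by
    rw [Matrix.det_transpose]
    exact (Matrix.det_vandermonde_ne_zero_iff).mpr hxinj
  have hv0 : v = 0 := Matrix.eq_zero_of_mulVec_eq_zero hdet hmv
  have t0 : Fin w := ⟨0, hwpos⟩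
  have := congrFun hv0 t0
  simp only [hv, Pi.zero_apply, mul_eq_zero] at this
  rcases this with h | h
  · have : a (e t0) = 0 := by
      have := (algebraMap F K).injective (by simpa using h)
      exact this
    exact (Finset.mem_filter.mp (e t0).2).2 this
  · exact (pow_ne_zero _ (mul_ne_zero hd (pow_ne_zero _ hz0))) h

/-- BCH type bound: let `C = ⟨a_1(x),…,a_ρ(x)⟩` be a `ρ`-generator `Λ`-multi-twisted
code.  The zeros of `x^{m_i} − λ_i` in a splitting field `K` are `δ_i ζ_i^j` with `ζ_i`
a primitive `m_i`-th root of unity and `δ_i^{m_i} = λ_i`.  If for each `i` the polynomial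
`w_i = gcd(a_{1,i},…,a_{ρ,i}, x^{m_i}−λ_i)` has `b_i` zeros with consecutive exponents,
then every nonzero codeword of `C` has Hamming weight at least `min_i (b_i + 1)`. -/
theorem multiTwisted_BCH_bound (F K : Type*) [Field F] [Fintype F] [Field K]
    [Algebra F K]
    (ℓ ρ : ℕ) (m : Fin ℓ → ℕ) (hm : ∀ i, 0 < m i) (hℓ : 0 < ℓ)
    (hco : ∀ i, Nat.Coprime (m i) (Fintype.card F))
    (Λ : Fin ℓ → F) (hΛ : ∀ i, Λ i ≠ 0)
    (δ ζ : Fin ℓ → K) (hδ : ∀ i, δ i ^ m i = algebraMap F K (Λ i))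
    (hζ : ∀ i, IsPrimitiveRoot (ζ i) (m i))
    (A : Fin ρ → ∀ i, Fin (m i) → F)
    (Ccode : Submodule F (∀ i, Fin (m i) → F))
    (hCcode : Ccode = Submodule.span F
      {v | ∃ (κ : Fin ρ) (jj : ℕ), v = (mtShift m hm Λ)^[jj] (A κ)})
    (b : Fin ℓ → ℕ)
    (hb : ∀ i, ∃ j0 : ℕ, ∀ s < b i,
      (Polynomial.aeval (δ i * ζ i ^ (j0 + s)))
        (gcd ((X : Polynomial F) ^ m i - C (Λ i))
          (Finset.univ.gcd fun κ => blockPoly (A κ i))) = 0) :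
    ∀ c ∈ Ccode, c ≠ 0 →
      (Finset.univ.inf' ⟨⟨0, hℓ⟩, Finset.mem_univ _⟩ fun i => b i + 1) ≤ mtWeight m c := by
  intro c hc hcne
  obtain ⟨i, hi⟩ : ∃ i, c i ≠ 0 := by
    by_contra h; push_neg at h; exact hcne (funext h)
  choose j0 hj0 using hb
  -- the root α_s and its basic property
  have hαm : ∀ s : ℕ, (δ i * ζ i ^ (j0 i + s)) ^ m i = algebraMap F K (Λ i) := by
    intro s
    rw [mul_pow, hδ, ← pow_mul, mul_comm (j0 i + s) (m i), pow_mul, (hζ i).pow_eq_one,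
      one_pow, mul_one]
  -- every codeword's i-th block vanishes at the roots α_s
  have key : ∀ s < b i, aeval (δ i * ζ i ^ (j0 i + s)) (blockPoly (c i)) = 0 := by
    rw [hCcode] at hc
    refine Submodule.span_induction
      (p := fun (v : ∀ i, Fin (m i) → F) _ => ∀ s < b i, aeval (δ i * ζ i ^ (j0 i + s)) (blockPoly (v i)) = 0)
      ?_ ?_ ?_ ?_ hc
    · rintro v ⟨κ, jj, rfl⟩ s hs
      set α := δ i * ζ i ^ (j0 i + s) with hα
      have base : aeval α (blockPoly (A κ i)) = 0 := by
        have hdvd : gcd ((X : Polynomial F) ^ m i - C (Λ i))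
            (Finset.univ.gcd fun κ => blockPoly (A κ i)) ∣ blockPoly (A κ i) :=
          dvd_trans (gcd_dvd_right _ _) (Finset.gcd_dvd (Finset.mem_univ κ))
        obtain ⟨q, hq⟩ := hdvd
        rw [hq, _root_.map_mul, hj0 i s hs, zero_mul]
      have iter : ∀ jj (v : ∀ i, Fin (m i) → F),
          aeval α (blockPoly (((mtShift m hm Λ)^[jj] v) i))
            = α ^ jj * aeval α (blockPoly (v i)) := by
        intro jj
        induction jj with
        | zero => intro v; simp
        | succ n ih =>
          intro v
          rw [Function.iterate_succ_apply', pow_succ]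
          have : aeval α (blockPoly ((mtShift m hm Λ ((mtShift m hm Λ)^[n] v)) i))
              = α * aeval α (blockPoly (((mtShift m hm Λ)^[n] v) i)) :=
            shift_aux (m i) (hm i) (Λ i) (((mtShift m hm Λ)^[n] v) i) α (hαm s)
          rw [this, ih v]; ring
      rw [iter, base, mul_zero]
    · intro s hs
      have : blockPoly ((0 : ∀ i, Fin (m i) → F) i) = 0 := by
        simp [blockPoly]
      rw [this, map_zero]
    · intro u v hu hv hu' hv' s hs
      have : blockPoly ((u + v) i) = blockPoly (u i) + blockPoly (v i) := by
        simp [blockPoly, add_mul, Finset.sum_add_distrib]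
      rw [this, map_add, hu' s hs, hv' s hs, add_zero]
    · intro r v hv hv' s hs
      have : blockPoly ((r • v) i) = C r * blockPoly (v i) := by
        simp only [blockPoly, Finset.mul_sum]
        refine Finset.sum_congr rfl fun j _ => ?_
        simp [Pi.smul_apply, smul_eq_mul, map_mul, mul_assoc]
      rw [this, _root_.map_mul, hv' s hs, mul_zero]
  -- nonvanishing facts
  have hdne : δ i ≠ 0 := by
    intro h
    have := hδ i
    rw [h, zero_pow (hm i).ne'] at this
    exact hΛ i ((algebraMap F K).injective (by simpa using this.symm))
  have hzne : ζ i ≠ 0 := (hζ i).ne_zero (hm i).ne'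
  -- apply the Vandermonde core
  have hle : b i + 1 ≤ (Finset.univ.filter fun j => c i j ≠ 0).card := by
    refine bch_core (m i) (b i) (c i) hi (δ i) (ζ i) hdne hzne
      (fun _ _ hi' hj' h => (hζ i).pow_inj hi' hj' h) (j0 i) ?_
    intro s hs
    rw [← aeval_blockPoly]
    exact key s hs
  calc (Finset.univ.inf' ⟨⟨0, hℓ⟩, Finset.mem_univ _⟩ fun i => b i + 1)
      ≤ b i + 1 := Finset.inf'_le _ (Finset.mem_univ i)
    _ ≤ (Finset.univ.filter fun j => c i j ≠ 0).card := hle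
    _ ≤ mtWeight m c :=
        Finset.single_le_sum (f := fun i => (Finset.univ.filter fun j => c i j ≠ 0).card)
          (fun _ _ => Nat.zero_le _) (Finset.mem_univ i)
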